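/- If n < 2k and the updating agent I(t) is chosen independently and uniformly at random from {1,…,n} at each time t, then the k-nearest-neighbor dynamics converges almost surely to a consensus x(t) → c·1, with c ∈ [min_i x_i(0), max_i x_i(0)]. -/

import Mathlib

open scoped Classical
open Finset

noncomputable def nearList {n : ℕ} (x : Fin n → ℝ) (i : Fin n) : List (Fin n) :=
  @List.insertionSort (Fin n)
    (fun j j' => |x j - x i| < |x j' - x i| ∨ (|x j - x i| = |x j' - x i| ∧ j ≤ j'))
    (Classical.decRel _) (List.finRange n)

/-- The set of the `k` agents nearest to `i` in opinion distance (ties broken by lower index). -/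
noncomputable def nbr {n : ℕ} (k : ℕ) (x : Fin n → ℝ) (i : Fin n) : Finset (Fin n) :=
  ((nearList x i).take k).toFinset

/-- The asynchronous update `f(x,i)`. -/
noncomputable def upd {n : ℕ} (k : ℕ) (x : Fin n → ℝ) (i : Fin n) : Fin n → ℝ :=
  Function.update x i ((∑ j ∈ nbr k x i, x j) / k)

/-- A configuration is clustered if all neighbors of every agent share its opinion. -/
def Clustered {n : ℕ} (k : ℕ) (x : Fin n → ℝ) : Prop :=
  ∀ i : Fin n, ∀ j ∈ nbr k x i, x j = x i

/-- `μ(x)`: lowest index attaining the minimum. -/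
noncomputable def argminIdx {n : ℕ} [NeZero n] (x : Fin n → ℝ) : Fin n :=
  (Finset.univ.filter fun i => ∀ j, x i ≤ x j).min' (by
    obtain ⟨i, -, hi⟩ := Finset.exists_min_image Finset.univ x Finset.univ_nonempty
    exact ⟨i, Finset.mem_filter.mpr ⟨Finset.mem_univ _, fun j => hi j (Finset.mem_univ j)⟩⟩)

/-- `M(x)`: lowest index attaining the maximum. -/
noncomputable def argmaxIdx {n : ℕ} [NeZero n] (x : Fin n → ℝ) : Fin n :=
  argminIdx (fun i => -x i)

/-- Trajectory of the dynamics with (possibly state-dependent) update selector `σ`. -/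
noncomputable def traj {n : ℕ} (k : ℕ) (σ : ℕ → (Fin n → ℝ) → Fin n) (x0 : Fin n → ℝ) :
    ℕ → Fin n → ℝ
  | 0 => x0
  | t + 1 => upd k (traj k σ x0 t) (σ t (traj k σ x0 t))


section Det
variable {n k : ℕ}

lemma nearList_perm (x : Fin n → ℝ) (i : Fin n) : (nearList x i).Perm (List.finRange n) :=
  @List.perm_insertionSort (Fin n) _ (Classical.decRel _) (List.finRange n)

lemma nearList_nodup (x : Fin n → ℝ) (i : Fin n) : (nearList x i).Nodup :=
  ((nearList_perm x i).nodup_iff).2 (List.nodup_finRange n)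

lemma nearList_length (x : Fin n → ℝ) (i : Fin n) : (nearList x i).length = n := by
  simpa using (nearList_perm x i).length_eq

lemma card_nbr (hkn : k ≤ n) (x : Fin n → ℝ) (i : Fin n) : (nbr k x i).card = k := by
  rw [nbr, List.toFinset_card_of_nodup ((nearList_nodup x i).sublist (List.take_sublist _ _))]
  simp [nearList_length x i, hkn]

lemma sum_nbr_le (hkn : k ≤ n) (x : Fin n → ℝ) (i : Fin n) {M : ℝ} (hM : ∀ j, x j ≤ M) :
    ∑ j ∈ nbr k x i, x j ≤ k * M := by
  calc ∑ j ∈ nbr k x i, x j ≤ (nbr k x i).card • M :=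
        Finset.sum_le_card_nsmul _ _ _ (fun j _ => hM j)
  _ = k * M := by rw [card_nbr hkn]; simp [nsmul_eq_mul]

lemma le_sum_nbr (hkn : k ≤ n) (x : Fin n → ℝ) (i : Fin n) {m : ℝ} (hm : ∀ j, m ≤ x j) :
    k * m ≤ ∑ j ∈ nbr k x i, x j := by
  calc (k : ℝ) * m = (nbr k x i).card • m := by rw [card_nbr hkn]; simp [nsmul_eq_mul]
  _ ≤ ∑ j ∈ nbr k x i, x j := Finset.card_nsmul_le_sum _ _ _ (fun j _ => hm j)

lemma upd_eq_self (k : ℕ) (x : Fin n → ℝ) (i j : Fin n) (hj : j ≠ i) :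
    upd k x i j = x j := Function.update_of_ne hj _ _

lemma upd_eq_avg (k : ℕ) (x : Fin n → ℝ) (i : Fin n) :
    upd k x i i = (∑ j ∈ nbr k x i, x j) / k := Function.update_self _ _ _

lemma upd_bounds (hk : 1 ≤ k) (hkn : k ≤ n) (x : Fin n → ℝ) (i : Fin n) {m M : ℝ}
    (h : ∀ j, m ≤ x j ∧ x j ≤ M) : ∀ j, m ≤ upd k x i j ∧ upd k x i j ≤ M := by
  have hkpos : (0:ℝ) < k := by exact_mod_cast hk
  intro j
  rcases eq_or_ne j i with rfl | hne
  · rw [upd_eq_avg]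
    constructor
    · rw [le_div_iff₀ hkpos, mul_comm]
      exact le_sum_nbr hkn x j (fun j => (h j).1)
    · rw [div_le_iff₀ hkpos, mul_comm]
      exact sum_nbr_le hkn x j (fun j => (h j).2)
  · rw [upd_eq_self k x i j hne]; exact h j

/-- key counting upper bound -/
lemma key_upper (hk : 1 ≤ k) (hkn : k ≤ n) (x : Fin n → ℝ) (i : Fin n)
    (T : Finset (Fin n)) {a M : ℝ} (haM : a ≤ M) {d : ℕ}
    (hd : (Finset.univ \ T).card + d ≤ k)
    (hT : ∀ j ∈ T, x j ≤ a) (hM : ∀ j, x j ≤ M) :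
    (∑ j ∈ nbr k x i, x j) / k ≤ M - (d : ℝ) / k * (M - a) := by
  have hkpos : (0:ℝ) < k := by exact_mod_cast hk
  set N := nbr k x i with hN
  have hcard : N.card = k := card_nbr hkn x i
  have hc2 : (N \ T).card ≤ (Finset.univ \ T).card :=
    Finset.card_le_card (fun j hj => by
      simp only [Finset.mem_sdiff] at hj ⊢; exact ⟨Finset.mem_univ j, hj.2⟩)
  have hcsum : (N ∩ T).card + (N \ T).card = k := by
    rw [Finset.card_inter_add_card_sdiff, hcard]
  have hc1 : d ≤ (N ∩ T).card := by omega
  have hsplit : ∑ j ∈ N \ T, x j + ∑ j ∈ N ∩ T, x j = ∑ j ∈ N, x j := by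
    rw [← Finset.sdiff_inter_self_left N T]
    exact Finset.sum_sdiff (Finset.inter_subset_left)
  have h1 : ∑ j ∈ N ∩ T, x j ≤ ((N ∩ T).card : ℝ) * a := by
    calc ∑ j ∈ N ∩ T, x j ≤ (N ∩ T).card • a :=
          Finset.sum_le_card_nsmul _ _ _ (fun j hj => hT j (Finset.mem_inter.1 hj).2)
    _ = _ := by simp [nsmul_eq_mul]
  have h2 : ∑ j ∈ N \ T, x j ≤ ((N \ T).card : ℝ) * M := by
    calc ∑ j ∈ N \ T, x j ≤ (N \ T).card • M :=
          Finset.sum_le_card_nsmul _ _ _ (fun j _ => hM j)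
    _ = _ := by simp [nsmul_eq_mul]
  rw [div_le_iff₀ hkpos]
  have hc1' : (d : ℝ) ≤ ((N ∩ T).card : ℝ) := by exact_mod_cast hc1
  have hcsum' : ((N ∩ T).card : ℝ) + ((N \ T).card : ℝ) = (k : ℝ) := by exact_mod_cast hcsum
  have key' : (d:ℝ)*M - (d:ℝ)*a ≤ ((N ∩ T).card : ℝ)*M - ((N ∩ T).card : ℝ)*a := by
    nlinarith [mul_le_mul_of_nonneg_right hc1' (sub_nonneg.2 haM)]
  have hkM : ((N ∩ T).card : ℝ)*M + ((N \ T).card : ℝ)*M = (k:ℝ)*M := by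
    rw [← add_mul, hcsum']
  have expand : (M - (d:ℝ)/(k:ℝ)*(M-a))*(k:ℝ) = (k:ℝ)*M - ((d:ℝ)*M - (d:ℝ)*a) := by
    field_simp
  linarith [hsplit, h1, h2, key', hkM, expand]
end Det

section MinMax
variable {n k : ℕ} [NeZero n]

instance : Nonempty (Fin n) := ⟨⟨0, Nat.pos_of_ne_zero (NeZero.ne n)⟩⟩

noncomputable def mnv (x : Fin n → ℝ) : ℝ := Finset.univ.inf' Finset.univ_nonempty x
noncomputable def mxv (x : Fin n → ℝ) : ℝ := Finset.univ.sup' Finset.univ_nonempty x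
noncomputable def diam (x : Fin n → ℝ) : ℝ := mxv x - mnv x

lemma mnv_le (x : Fin n → ℝ) (j : Fin n) : mnv x ≤ x j :=
  Finset.inf'_le _ (Finset.mem_univ j)

lemma le_mxv (x : Fin n → ℝ) (j : Fin n) : x j ≤ mxv x :=
  Finset.le_sup' _ (Finset.mem_univ j)

lemma le_mnv {x : Fin n → ℝ} {m : ℝ} (h : ∀ j, m ≤ x j) : m ≤ mnv x :=
  Finset.le_inf' _ _ (fun j _ => h j)

lemma mxv_le {x : Fin n → ℝ} {M : ℝ} (h : ∀ j, x j ≤ M) : mxv x ≤ M :=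
  Finset.sup'_le _ _ (fun j _ => h j)

lemma mnv_le_mxv (x : Fin n → ℝ) : mnv x ≤ mxv x :=
  le_trans (mnv_le x (Classical.arbitrary _)) (le_mxv x _)

lemma diam_nonneg (x : Fin n → ℝ) : 0 ≤ diam x := sub_nonneg.2 (mnv_le_mxv x)

lemma mnv_neg (x : Fin n → ℝ) : mnv (fun j => -x j) = -mxv x := by
  apply le_antisymm
  · obtain ⟨j, -, hj⟩ := Finset.exists_mem_eq_sup' (Finset.univ_nonempty) x
    calc mnv (fun j => -x j) ≤ -x j := mnv_le _ j
    _ = -mxv x := by rw [show mxv x = x j from hj]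
  · exact le_mnv (fun j => neg_le_neg (le_mxv x j))

lemma mxv_neg (x : Fin n → ℝ) : mxv (fun j => -x j) = -mnv x := by
  apply le_antisymm
  · exact mxv_le (fun j => neg_le_neg (mnv_le x j))
  · obtain ⟨j, -, hj⟩ := Finset.exists_mem_eq_inf' (Finset.univ_nonempty) x
    calc -mnv x = -x j := by rw [show mnv x = x j from hj]
    _ ≤ mxv (fun j => -x j) := by simpa using le_mxv (fun j => -x j) j

lemma diam_neg (x : Fin n → ℝ) : diam (fun j => -x j) = diam x := by
  rw [diam, diam, mnv_neg, mxv_neg]; ring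

end MinMax

section Neg
variable {n k : ℕ}

lemma insertionSort_congr {α} {r1 r2 : α → α → Prop} (h : r1 = r2) (l : List α) :
    @List.insertionSort α r1 (Classical.decRel r1) l =
      @List.insertionSort α r2 (Classical.decRel r2) l := by subst h; rfl

lemma nearList_neg (x : Fin n → ℝ) (i : Fin n) :
    nearList (fun j => -x j) i = nearList x i := by
  have hrel : (fun j j' : Fin n => |(-x j) - (-x i)| < |(-x j') - (-x i)| ∨
      (|(-x j) - (-x i)| = |(-x j') - (-x i)| ∧ j ≤ j')) = (fun j j' : Fin n =>
      |x j - x i| < |x j' - x i| ∨ (|x j - x i| = |x j' - x i| ∧ j ≤ j')) := by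
    funext j j'
    rw [show -x j - -x i = -(x j - x i) by ring, show -x j' - -x i = -(x j' - x i) by ring,
      abs_neg, abs_neg]
  exact insertionSort_congr hrel _

lemma nbr_neg (x : Fin n → ℝ) (i : Fin n) : nbr k (fun j => -x j) i = nbr k x i := by
  rw [nbr, nbr, nearList_neg]

lemma upd_neg (x : Fin n → ℝ) (i : Fin n) :
    upd k (fun j => -x j) i = fun j => -upd k x i j := by
  funext j
  rcases eq_or_ne j i with rfl | hne
  · rw [upd_eq_avg, upd_eq_avg, nbr_neg, Finset.sum_neg_distrib, neg_div]
  · rw [upd_eq_self _ _ _ _ hne, upd_eq_self _ _ _ _ hne]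

end Neg

noncomputable def applyU {n : ℕ} (k : ℕ) (p : ℕ → Fin n) (x : Fin n → ℝ) : ℕ → (Fin n → ℝ)
  | 0 => x
  | s + 1 => upd k (applyU k p x s) (p s)

lemma applyU_neg {n k : ℕ} (p : ℕ → Fin n) (x : Fin n → ℝ) (s : ℕ) :
    applyU k p (fun j => -x j) s = fun j => -applyU k p x s j := by
  induction s with
  | zero => rfl
  | succ s ih => rw [applyU, applyU, ih, upd_neg]

section Contract
variable {n k : ℕ} [NeZero n]

lemma contract_aux (hk : 1 ≤ k) (hkn : k ≤ n) (x : Fin n → ℝ)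
    (hS : (Finset.univ.filter (fun j => mnv x + diam x / 2 < x j)).card < k) :
    ∃ p : ℕ → Fin n, ∀ j, mnv x ≤ applyU k p x n j ∧
      applyU k p x n j ≤ mxv x - diam x / (2 * k) := by
  have hkpos : (0:ℝ) < k := by exact_mod_cast hk
  set m := mnv x with hm
  set M := mxv x with hM
  set D := diam x with hDdef
  have hD : 0 ≤ D := diam_nonneg x
  set a : ℝ := m + D / 2 with ha
  set S : Finset (Fin n) := Finset.univ.filter (fun j => a < x j) with hSdef
  set M' : ℝ := M - D / (2 * k) with hM'
  have haM : a ≤ M := by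
    have : D / 2 ≤ D := by linarith
    simp only [ha, hDdef, diam] at *
    linarith
  have haM' : a ≤ M' := by
    have h1 : D / (2 * k) ≤ D / 2 := by
      apply div_le_div_of_nonneg_left hD two_pos
      have : (1:ℝ) ≤ k := by exact_mod_cast hk
      linarith
    simp only [ha, hM', hDdef, diam] at *
    linarith
  have hma : m ≤ a := by simp only [ha]; linarith
  set i₀ : Fin n := Classical.arbitrary (Fin n) with hi₀
  set L : List (Fin n) := S.toList with hL
  have hLnodup : L.Nodup := S.nodup_toList
  have hLlen : L.length = S.card := Finset.length_toList S
  have hLlen_le : L.length ≤ n := by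
    rw [hLlen]
    simpa using Finset.card_le_univ S
  set p : ℕ → Fin n := fun s => L.getD s i₀ with hp
  -- the key single-update bound
  have hupd : ∀ y : Fin n → ℝ, (∀ j, y j ≤ M) → (∀ j, j ∉ S → y j = x j) →
      ∀ i, (∑ j ∈ nbr k y i, y j) / k ≤ M' := by
    intro y hyM hyS i
    have := key_upper (T := Finset.univ \ S) hk hkn y i haM (d := 1)
      (by
        have : (Finset.univ \ (Finset.univ \ S)).card = S.card := by
          rw [Finset.sdiff_sdiff_self_left, Finset.univ_inter]
        omega)
      (fun j hj => by
        have hjS : j ∉ S := (Finset.mem_sdiff.1 hj).2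
        rw [hyS j hjS]
        have : ¬ a < x j := by
          intro hlt
          exact hjS (by simp [hSdef, hlt])
        linarith)
      hyM
    have heq : M - (1:ℕ)/(k:ℝ) * (M - a) = M' := by
      have hmMD : M - m = D := by simp [hDdef, diam, hm, hM]
      have hMa : M - a = D / 2 := by rw [ha]; linarith
      rw [hMa, Nat.cast_one, div_mul_eq_mul_div, one_mul, div_div, hM']
    rw [heq] at this
    exact this
  -- phase 1 invariant
  have claim1 : ∀ s, s ≤ L.length →
      (∀ j, m ≤ applyU k p x s j ∧ applyU k p x s j ≤ M) ∧
      (∀ j, j ∉ S → applyU k p x s j = x j) ∧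
      (∀ t, t < s → applyU k p x s (L.getD t i₀) ≤ M') := by
    intro s
    induction s with
    | zero =>
      intro _
      refine ⟨fun j => ⟨mnv_le x j, le_mxv x j⟩, fun j _ => rfl, fun t ht => absurd ht (by omega)⟩
    | succ s ih =>
      intro hs1
      have hs : s < L.length := by omega
      obtain ⟨ih1, ih2, ih3⟩ := ih (le_of_lt hs)
      set y := applyU k p x s with hy
      have hps : p s = L[s] := List.getD_eq_getElem L i₀ hs
      have hpsS : p s ∈ S := by
        rw [hps, ← Finset.mem_toList]
        exact List.getElem_mem hs
      have h1 : ∀ j, m ≤ applyU k p x (s+1) j ∧ applyU k p x (s+1) j ≤ M :=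
        upd_bounds hk hkn y (p s) ih1
      refine ⟨h1, ?_, ?_⟩
      · intro j hj
        have hji : j ≠ p s := fun h => hj (h ▸ hpsS)
        rw [applyU, upd_eq_self _ _ _ _ hji]
        exact ih2 j hj
      · intro t ht
        rcases eq_or_ne t s with rfl | hts
        · rw [applyU, show L.getD t i₀ = p t from rfl, hps, ← hps, upd_eq_avg]
          exact hupd y (fun j => (ih1 j).2) ih2 (p t)
        · have htlt : t < s := by omega
          have hne : L.getD t i₀ ≠ p s := by
            rw [hps, List.getD_eq_getElem L i₀ (by omega : t < L.length)]
            intro h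
            exact hts ((List.Nodup.getElem_inj_iff hLnodup).1 h)
          rw [applyU, upd_eq_self _ _ _ _ hne]
          exact ih3 t htlt
  -- end of phase 1
  have hfull : ∀ j, m ≤ applyU k p x L.length j ∧ applyU k p x L.length j ≤ M' := by
    obtain ⟨c1, c2, c3⟩ := claim1 L.length le_rfl
    intro j
    refine ⟨(c1 j).1, ?_⟩
    by_cases hj : j ∈ S
    · rw [← Finset.mem_toList, ← hL] at hj
      obtain ⟨t, ht, rfl⟩ := List.mem_iff_getElem.1 hj
      rw [← List.getD_eq_getElem L i₀ ht]
      exact c3 t ht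
    · rw [c2 j hj]
      have : ¬ a < x j := by
        intro hlt
        exact hj (by simp [hSdef, hlt])
      linarith
  -- phase 2
  have claim2 : ∀ s, L.length ≤ s →
      ∀ j, m ≤ applyU k p x s j ∧ applyU k p x s j ≤ M' := by
    intro s hs
    induction s, hs using Nat.le_induction with
    | base => exact hfull
    | succ s hs ih => exact upd_bounds hk hkn _ _ ih
  exact ⟨p, claim2 n hLlen_le⟩

lemma contract (hk : 1 ≤ k) (hkn : k ≤ n) (hnk : n < 2 * k) (x : Fin n → ℝ) :
    ∃ p : ℕ → Fin n, diam (applyU k p x n) ≤ (1 - 1 / (2 * (k:ℝ))) * diam x := by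
  have hkpos : (0:ℝ) < k := by
    have : (1:ℕ) ≤ k := hk
    exact_mod_cast Nat.lt_of_lt_of_le Nat.zero_lt_one this
  by_cases hS : (Finset.univ.filter (fun j => mnv x + diam x / 2 < x j)).card < k
  · obtain ⟨p, hp⟩ := contract_aux hk hkn x hS
    refine ⟨p, ?_⟩
    have h1 : mnv x ≤ mnv (applyU k p x n) := le_mnv (fun j => (hp j).1)
    have h2 : mxv (applyU k p x n) ≤ mxv x - diam x / (2 * k) := mxv_le (fun j => (hp j).2)
    rw [diam]
    have : (1 - 1 / (2 * (k:ℝ))) * diam x = (mxv x - diam x / (2*k)) - mnv x := by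
      rw [diam]; field_simp; ring
    rw [this]
    linarith
  · push_neg at hS
    set y : Fin n → ℝ := fun j => -x j with hy
    have hSy : (Finset.univ.filter (fun j => mnv y + diam y / 2 < y j)).card < k := by
      have hsub : (Finset.univ.filter (fun j => mnv y + diam y / 2 < y j)) ⊆
          (Finset.univ.filter (fun j => ¬ (mnv x + diam x / 2 < x j))) := by
        intro j hj
        simp only [Finset.mem_filter, Finset.mem_univ, true_and] at hj ⊢
        rw [hy] at hj
        simp only [mnv_neg, diam_neg] at hj
        intro hlt
        -- hj : -mxv x + diam x / 2 < -x j, so x j < mxv x - diam x/2 = mnv x + diam x/2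
        have hd : mxv x - diam x / 2 = mnv x + diam x / 2 := by rw [diam]; ring
        have : x j < mxv x - diam x / 2 := by linarith
        rw [hd] at this
        linarith
      have hcompl : (Finset.univ.filter (fun j => ¬ (mnv x + diam x / 2 < x j))).card =
          n - (Finset.univ.filter (fun j => mnv x + diam x / 2 < x j)).card := by
        rw [Finset.filter_not, Finset.card_sdiff_of_subset (Finset.filter_subset _ _)]
        simp
      have := Finset.card_le_card hsub
      omega
    obtain ⟨p, hp⟩ := contract_aux hk hkn y hSy
    refine ⟨p, ?_⟩
    have hneg : applyU k p y n = fun j => -applyU k p x n j := applyU_neg p x n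
    have h1 : ∀ j, mnv y ≤ -applyU k p x n j := by
      intro j
      have := (hp j).1
      rwa [hneg] at this
    have h2 : ∀ j, -applyU k p x n j ≤ mxv y - diam y / (2 * k) := by
      intro j
      have := (hp j).2
      rwa [hneg] at this
    simp only [hy, mnv_neg, mxv_neg, diam_neg] at h1 h2
    have h1' : ∀ j, applyU k p x n j ≤ mxv x := fun j => by have := h1 j; linarith
    have h2' : ∀ j, mnv x + diam x / (2 * k) ≤ applyU k p x n j := fun j => by
      have := h2 j; linarith
    have hup : mxv (applyU k p x n) ≤ mxv x := mxv_le h1'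
    have hlo : mnv x + diam x / (2 * k) ≤ mnv (applyU k p x n) := le_mnv h2'
    rw [diam]
    have : (1 - 1 / (2 * (k:ℝ))) * diam x = mxv x - (mnv x + diam x / (2*k)) := by
      rw [diam]; field_simp; ring
    rw [this]
    linarith

end Contract

section Traj
variable {n k : ℕ} [NeZero n]

lemma traj_agree (x0 : Fin n → ℝ) (f g : ℕ → Fin n) :
    ∀ t, (∀ s, s < t → f s = g s) →
      traj k (fun s _ => f s) x0 t = traj k (fun s _ => g s) x0 t := by
  intro t
  induction t with
  | zero => intro _; rfl
  | succ t ih =>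
    intro h
    show upd k (traj k (fun s _ => f s) x0 t) (f t) = upd k (traj k (fun s _ => g s) x0 t) (g t)
    rw [ih (fun s hs => h s (by omega)), h t (by omega)]

lemma traj_shift (x0 : Fin n → ℝ) (f : ℕ → Fin n) (t0 : ℕ) :
    ∀ s, traj k (fun s _ => f s) x0 (t0 + s) =
      applyU k (fun u => f (t0 + u)) (traj k (fun s _ => f s) x0 t0) s := by
  intro s
  induction s with
  | zero => rfl
  | succ s ih =>
    show upd k (traj k (fun s _ => f s) x0 (t0 + s)) (f (t0 + s)) = _
    rw [ih]; rfl

lemma applyU_congr (x : Fin n → ℝ) (p p' : ℕ → Fin n) :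
    ∀ s, (∀ u, u < s → p u = p' u) → applyU k p x s = applyU k p' x s := by
  intro s
  induction s with
  | zero => intro _; rfl
  | succ s ih =>
    intro h
    show upd k (applyU k p x s) (p s) = upd k (applyU k p' x s) (p' s)
    rw [ih (fun u hu => h u (by omega)), h s (by omega)]

lemma traj_bounds (hk : 1 ≤ k) (hkn : k ≤ n) (x0 : Fin n → ℝ) (f : ℕ → Fin n) (t : ℕ) :
    ∀ j, mnv x0 ≤ traj k (fun s _ => f s) x0 t j ∧ traj k (fun s _ => f s) x0 t j ≤ mxv x0 := by
  induction t with
  | zero => exact fun j => ⟨mnv_le x0 j, le_mxv x0 j⟩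
  | succ t ih => exact upd_bounds hk hkn _ _ ih

lemma diam_traj_antitone (hk : 1 ≤ k) (hkn : k ≤ n) (x0 : Fin n → ℝ) (f : ℕ → Fin n)
    {t t' : ℕ} (h : t ≤ t') :
    diam (traj k (fun s _ => f s) x0 t') ≤ diam (traj k (fun s _ => f s) x0 t) ∧
    mnv (traj k (fun s _ => f s) x0 t) ≤ mnv (traj k (fun s _ => f s) x0 t') ∧
    mxv (traj k (fun s _ => f s) x0 t') ≤ mxv (traj k (fun s _ => f s) x0 t) := by
  induction t', h using Nat.le_induction with
  | base => exact ⟨le_rfl, le_rfl, le_rfl⟩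
  | succ t' ht ih =>
    obtain ⟨ih1, ih2, ih3⟩ := ih
    have hb := upd_bounds hk hkn (traj k (fun s _ => f s) x0 t')
      ((fun s _ => f s) t' (traj k (fun s _ => f s) x0 t'))
      (fun j => ⟨mnv_le _ j, le_mxv _ j⟩)
    have h1 : mnv (traj k (fun s _ => f s) x0 t') ≤ mnv (traj k (fun s _ => f s) x0 (t'+1)) :=
      le_mnv (fun j => (hb j).1)
    have h2 : mxv (traj k (fun s _ => f s) x0 (t'+1)) ≤ mxv (traj k (fun s _ => f s) x0 t') :=
      mxv_le (fun j => (hb j).2)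
    refine ⟨?_, le_trans ih2 h1, le_trans h2 ih3⟩
    simp only [diam]
    simp only [diam] at ih1
    linarith

end Traj

section Prob
open MeasureTheory ProbabilityTheory
open scoped ENNReal

variable {n : ℕ} [NeZero n] {Ω : Type*} [MeasurableSpace Ω]

def cylSet (I : ℕ → Ω → Fin n) (S : Finset ℕ) (w : ℕ → Fin n) : Set Ω :=
  ⋂ t ∈ S, (I t) ⁻¹' {w t}

lemma mem_cylSet {I : ℕ → Ω → Fin n} {S : Finset ℕ} {w : ℕ → Fin n} {ω : Ω} :
    ω ∈ cylSet I S w ↔ ∀ t ∈ S, I t ω = w t := by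
  simp [cylSet]

lemma cylSet_measurable {I : ℕ → Ω → Fin n} (hmeas : ∀ t, Measurable (I t))
    (S : Finset ℕ) (w : ℕ → Fin n) : MeasurableSet (cylSet I S w) :=
  MeasurableSet.biInter S.countable_toSet (fun t _ => (hmeas t) (measurableSet_singleton _))

lemma cylSet_prob (P : Measure Ω) [IsProbabilityMeasure P] {I : ℕ → Ω → Fin n}
    (hindep : iIndepFun I P)
    (hunif : ∀ t : ℕ, ∀ a : Fin n, P {ω | I t ω = a} = 1 / n)
    (S : Finset ℕ) (w : ℕ → Fin n) :
    P (cylSet I S w) = (1 / (n : ℝ≥0∞)) ^ S.card := by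
  rw [cylSet, hindep.meas_biInter (fun i _ => ⟨{w i}, trivial, rfl⟩)]
  rw [Finset.prod_congr rfl (fun t _ => show P ((I t) ⁻¹' {w t}) = 1 / (n : ℝ≥0∞) from
    hunif t (w t)), Finset.prod_const]

noncomputable def wOf {n : ℕ} [NeZero n] (m : ℕ) (v : Fin m → Fin n) : ℕ → Fin n :=
  fun t => if h : t < m then v ⟨t, h⟩ else Classical.arbitrary _

def atomE (I : ℕ → Ω → Fin n) (m : ℕ) (v : Fin m → Fin n) : Set Ω :=
  cylSet I (Finset.range m) (wOf m v)

lemma mem_atomE {I : ℕ → Ω → Fin n} {m : ℕ} {v : Fin m → Fin n} {ω : Ω} :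
    ω ∈ atomE I m v ↔ ∀ t : Fin m, I t ω = v t := by
  rw [atomE, mem_cylSet]
  constructor
  · intro h t
    have := h t (Finset.mem_range.2 t.isLt)
    rwa [wOf, dif_pos t.isLt, Fin.eta] at this
  · intro h t ht
    rw [Finset.mem_range] at ht
    rw [wOf, dif_pos ht]
    exact h ⟨t, ht⟩

lemma atomE_agree {I : ℕ → Ω → Fin n} {m : ℕ} {v : Fin m → Fin n} {ω : Ω}
    (h : ω ∈ atomE I m v) : ∀ t, t < m → I t ω = wOf m v t := by
  intro t ht
  rw [wOf, dif_pos ht]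
  exact mem_atomE.1 h ⟨t, ht⟩

lemma atomE_disjoint {I : ℕ → Ω → Fin n} {m : ℕ} {v v' : Fin m → Fin n} (h : v ≠ v') :
    Disjoint (atomE I m v) (atomE I m v') := by
  rw [Set.disjoint_left]
  intro ω h1 h2
  obtain ⟨t, ht⟩ := Function.ne_iff.1 h
  exact ht ((mem_atomE.1 h1 t).symm.trans (mem_atomE.1 h2 t))

lemma atomE_prob (P : Measure Ω) [IsProbabilityMeasure P] {I : ℕ → Ω → Fin n}
    (hindep : iIndepFun I P)
    (hunif : ∀ t : ℕ, ∀ a : Fin n, P {ω | I t ω = a} = 1 / n)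
    (m : ℕ) (v : Fin m → Fin n) : P (atomE I m v) = (1 / (n : ℝ≥0∞)) ^ m := by
  rw [atomE, cylSet_prob P hindep hunif, Finset.card_range]

/-- the matching event: block `r` of updates realizes the pattern `Ψ` of the state
reached at the start of the block. -/
def MatchE (k : ℕ) (I : ℕ → Ω → Fin n) (Ψ : (Fin n → ℝ) → ℕ → Fin n) (x0 : Fin n → ℝ)
    (r : ℕ) (ω : Ω) : Prop :=
  ∀ s, s < n → I (r * n + s) ω = Ψ (traj k (fun t _ => I t ω) x0 (r * n)) s

lemma matchE_agree {k : ℕ} {I : ℕ → Ω → Fin n} {Ψ : (Fin n → ℝ) → ℕ → Fin n}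
    {x0 : Fin n → ℝ} {r m : ℕ} (hrm : (r + 1) * n ≤ m) {ω ω' : Ω}
    (hag : ∀ t, t < m → I t ω = I t ω') :
    MatchE k I Ψ x0 r ω ↔ MatchE k I Ψ x0 r ω' := by
  have htraj : traj k (fun t _ => I t ω) x0 (r * n) = traj k (fun t _ => I t ω') x0 (r * n) :=
    traj_agree x0 _ _ (r * n) (fun s hs => hag s (by nlinarith [Nat.le_of_lt hs]))
  unfold MatchE
  rw [htraj]
  constructor
  · intro h s hs
    rw [← hag (r * n + s) (by nlinarith)]
    exact h s hs
  · intro h s hs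
    rw [hag (r * n + s) (by nlinarith)]
    exact h s hs

end Prob

section ProbMain
open MeasureTheory ProbabilityTheory
open scoped ENNReal

variable {n : ℕ} [NeZero n] {Ω : Type*} [MeasurableSpace Ω]

lemma matchE_io (k : ℕ) (P : Measure Ω) [IsProbabilityMeasure P] (I : ℕ → Ω → Fin n)
    (hmeas : ∀ t, Measurable (I t))
    (hindep : iIndepFun I P)
    (hunif : ∀ t : ℕ, ∀ a : Fin n, P {ω | I t ω = a} = 1 / n)
    (Ψ : (Fin n → ℝ) → ℕ → Fin n) (x0 : Fin n → ℝ) :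
    ∀ᵐ ω ∂P, ∀ R₀ : ℕ, ∃ r, R₀ ≤ r ∧ MatchE k I Ψ x0 r ω := by
  have hn1 : 1 ≤ n := Nat.pos_of_ne_zero (NeZero.ne n)
  set q : ℝ≥0∞ := (1 / (n : ℝ≥0∞)) ^ n with hq
  have hq0 : q ≠ 0 := by
    apply pow_ne_zero
    rw [one_div]
    exact ENNReal.inv_ne_zero.2 (ENNReal.natCast_ne_top n)
  have hq1 : q ≤ 1 := by
    apply pow_le_one₀ (zero_le)
    rw [one_div]
    exact ENNReal.inv_le_one.2 (by exact_mod_cast hn1)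
  set Bset : ℕ → ℕ → Set Ω := fun R₀ R =>
    {ω | ∀ r, R₀ ≤ r → r < R₀ + R → ¬ MatchE k I Ψ x0 r ω} with hBdef
  -- cylindricality of Bset
  have hcylB : ∀ R₀ R (ω ω' : Ω), (∀ t, t < (R₀ + R) * n → I t ω = I t ω') →
      ω ∈ Bset R₀ R → ω' ∈ Bset R₀ R := by
    intro R₀ R ω ω' hag hω r hr1 hr2
    have h1 : (r + 1) * n ≤ (R₀ + R) * n := Nat.mul_le_mul_right n (by omega)
    rw [← matchE_agree h1 hag]
    exact hω r hr1 hr2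
  -- the inductive step
  have hstep : ∀ R₀ R, P (Bset R₀ (R + 1)) ≤ (1 - q) * P (Bset R₀ R) := by
    intro R₀ R
    set m := (R₀ + R) * n with hm
    set G : Finset (Fin m → Fin n) :=
      Finset.univ.filter (fun v => atomE I m v ⊆ Bset R₀ R) with hG
    -- per-atom computation
    have hterm : ∀ v : Fin m → Fin n,
        P (atomE I m v ∩ {ω | ¬ MatchE k I Ψ x0 (R₀ + R) ω}) = (1 - q) * P (atomE I m v) := by
      intro v
      set xv := traj k (fun t _ => wOf m v t) x0 m with hxv
      set w' : ℕ → Fin n := fun t => if h : t < m then wOf m v t else Ψ xv (t - m) with hw'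
      have hAM : atomE I m v ∩ {ω | MatchE k I Ψ x0 (R₀ + R) ω} =
          cylSet I (Finset.range (m + n)) w' := by
        ext ω
        simp only [Set.mem_inter_iff, Set.mem_setOf_eq, mem_cylSet, Finset.mem_range]
        constructor
        · rintro ⟨hat, hM⟩ t ht
          by_cases htm : t < m
          · rw [hw']
            simp only [dif_pos htm]
            exact atomE_agree hat t htm
          · rw [hw']
            simp only [dif_neg htm]
            have hs : t - m < n := by omega
            have htraj : traj k (fun t _ => I t ω) x0 ((R₀ + R) * n) = xv := by
              rw [hxv, ← hm]
              exact traj_agree x0 _ _ m (fun s hs => atomE_agree hat s hs)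
            have := hM (t - m) hs
            rw [htraj] at this
            rw [show (R₀ + R) * n + (t - m) = t by omega] at this
            exact this
        · intro hcy
          have hat : ω ∈ atomE I m v := by
            rw [mem_atomE]
            intro t
            have := hcy t (by omega)
            rw [hw'] at this
            simp only [dif_pos t.isLt] at this
            rw [this, wOf, dif_pos t.isLt, Fin.eta]
          refine ⟨hat, ?_⟩
          intro s hs
          have htraj : traj k (fun t _ => I t ω) x0 ((R₀ + R) * n) = xv := by
            rw [hxv, ← hm]
            exact traj_agree x0 _ _ m (fun s hs => atomE_agree hat s hs)
          rw [htraj]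
          have := hcy (m + s) (by omega)
          rw [hw'] at this
          simp only [dif_neg (by omega : ¬ m + s < m)] at this
          rw [show m + s - m = s by omega] at this
          rw [← hm]
          exact this
      have hPAM : P (atomE I m v ∩ {ω | MatchE k I Ψ x0 (R₀ + R) ω}) =
          q * P (atomE I m v) := by
        rw [hAM, cylSet_prob P hindep hunif, Finset.card_range,
          atomE_prob P hindep hunif, pow_add, hq]
        ring
      have hsplit : atomE I m v ∩ {ω | ¬ MatchE k I Ψ x0 (R₀ + R) ω} =
          atomE I m v \ (atomE I m v ∩ {ω | MatchE k I Ψ x0 (R₀ + R) ω}) := by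
        ext ω
        simp only [Set.mem_inter_iff, Set.mem_diff, Set.mem_setOf_eq]
        tauto
      rw [hsplit, measure_diff Set.inter_subset_left
        (by rw [hAM]; exact (cylSet_measurable hmeas _ _).nullMeasurableSet)
        (measure_ne_top P _), hPAM]
      rw [ENNReal.sub_mul (fun _ _ => measure_ne_top P _), one_mul]
    -- covering
    have hsub : Bset R₀ (R + 1) ⊆
        ⋃ v ∈ G, (atomE I m v ∩ {ω | ¬ MatchE k I Ψ x0 (R₀ + R) ω}) := by
      intro ω hω
      set vω : Fin m → Fin n := fun t => I t ω with hvω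
      have hat : ω ∈ atomE I m vω := mem_atomE.2 (fun t => rfl)
      have hωB : ω ∈ Bset R₀ R := fun r hr1 hr2 => hω r hr1 (by omega)
      have hvG : vω ∈ G := by
        rw [hG, Finset.mem_filter]
        refine ⟨Finset.mem_univ _, fun ω' hω' => ?_⟩
        apply hcylB R₀ R ω ω' _ hωB
        intro t ht
        have := mem_atomE.1 hω' ⟨t, ht⟩
        rw [this]
      apply Set.mem_biUnion hvG
      exact ⟨hat, hω (R₀ + R) (by omega) (by omega)⟩
    calc P (Bset R₀ (R + 1)) ≤
        ∑ v ∈ G, P (atomE I m v ∩ {ω | ¬ MatchE k I Ψ x0 (R₀ + R) ω}) :=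
          le_trans (measure_mono hsub) (measure_biUnion_finset_le G _)
      _ = ∑ v ∈ G, (1 - q) * P (atomE I m v) := Finset.sum_congr rfl (fun v _ => hterm v)
      _ = (1 - q) * ∑ v ∈ G, P (atomE I m v) := by rw [Finset.mul_sum]
      _ = (1 - q) * P (⋃ v ∈ G, atomE I m v) := by
          rw [measure_biUnion_finset
            (fun v _ v' _ hvv' => atomE_disjoint hvv')
            (fun v _ => (cylSet_measurable hmeas _ _))]
      _ ≤ (1 - q) * P (Bset R₀ R) := by
          apply mul_le_mul_right
          apply measure_mono
          intro ω hω
          obtain ⟨v, hvG, hv⟩ := Set.mem_iUnion₂.1 hω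
          exact (Finset.mem_filter.1 hvG).2 hv
  -- total bound
  have htotal : ∀ R₀ R, P (Bset R₀ R) ≤ (1 - q) ^ R := by
    intro R₀ R
    induction R with
    | zero => rw [pow_zero]; exact prob_le_one
    | succ R ih =>
      calc P (Bset R₀ (R + 1)) ≤ (1 - q) * P (Bset R₀ R) := hstep R₀ R
        _ ≤ (1 - q) * (1 - q) ^ R := mul_le_mul_right ih _
        _ = (1 - q) ^ (R + 1) := (pow_succ' (1 - q) R).symm
  -- bad sets are null
  have hbad : ∀ R₀ : ℕ, P {ω | ∀ r, R₀ ≤ r → ¬ MatchE k I Ψ x0 r ω} = 0 := by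
    intro R₀
    have htend : Filter.Tendsto (fun R => (1 - q) ^ R) Filter.atTop (nhds 0) :=
      ENNReal.tendsto_pow_atTop_nhds_zero_of_lt_one
        (ENNReal.sub_lt_self ENNReal.one_ne_top one_ne_zero hq0)
    refine le_antisymm ?_ (zero_le)
    refine ge_of_tendsto' htend (fun R => ?_)
    refine le_trans (measure_mono ?_) (htotal R₀ R)
    intro ω hω r hr1 _
    exact hω r hr1
  have hbadU : P (⋃ R₀ : ℕ, {ω | ∀ r, R₀ ≤ r → ¬ MatchE k I Ψ x0 r ω}) = 0 :=
    measure_iUnion_null hbad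
  rw [MeasureTheory.ae_iff]
  apply measure_mono_null _ hbadU
  intro ω hω
  simp only [Set.mem_setOf_eq] at hω
  push_neg at hω
  obtain ⟨R₀, hR⟩ := hω
  refine Set.mem_iUnion.2 ⟨R₀, ?_⟩
  show ∀ r, R₀ ≤ r → ¬ MatchE k I Ψ x0 r ω
  intro r hr hM
  exact hR r hr hM

end ProbMain


open MeasureTheory ProbabilityTheory in
/-- if `n < 2k` and the updating agent is i.i.d. uniform, the dynamics
converges almost surely to a consensus within the initial opinion range. -/
theorem converges_to_consensus {n k : ℕ} [NeZero n] (hk : 1 ≤ k) (hkn : k ≤ n)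
    (hnk : n < 2 * k) {Ω : Type*} [MeasurableSpace Ω] (P : Measure Ω)
    [IsProbabilityMeasure P] (I : ℕ → Ω → Fin n)
    (hmeas : ∀ t, Measurable (I t))
    (hindep : iIndepFun I P)
    (hunif : ∀ t : ℕ, ∀ a : Fin n, P {ω | I t ω = a} = 1 / n)
    (x0 : Fin n → ℝ) :
    ∀ᵐ ω ∂P, ∃ c : ℝ, sInf (Set.range x0) ≤ c ∧ c ≤ sSup (Set.range x0) ∧
      Filter.Tendsto (fun t => traj k (fun t _ => I t ω) x0 t) Filter.atTop
        (nhds (fun _ => c)) := by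

  have hn1 : 1 ≤ n := Nat.pos_of_ne_zero (NeZero.ne n)
  obtain ⟨Ψ, hΨ⟩ : ∃ Ψ : (Fin n → ℝ) → ℕ → Fin n,
      ∀ x, diam (applyU k (Ψ x) x n) ≤ (1 - 1/(2*(k:ℝ))) * diam x :=
    ⟨fun x => Classical.choose (contract hk hkn hnk x),
     fun x => Classical.choose_spec (contract hk hkn hnk x)⟩
  filter_upwards [matchE_io k P I hmeas hindep hunif Ψ x0] with ω hgood
  set ρ : ℝ := 1 - 1/(2*(k:ℝ)) with hρdef
  have hkpos : (0:ℝ) < k := by exact_mod_cast hk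
  have hk1 : (1:ℝ) ≤ (k:ℝ) := by exact_mod_cast hk
  have hρ0 : 0 ≤ ρ := by
    have h2k : (1:ℝ) ≤ 2*(k:ℝ) := by linarith
    have : 1/(2*(k:ℝ)) ≤ 1 := by
      rw [div_le_one (by linarith)]; linarith
    rw [hρdef]; linarith
  have hρ1 : ρ < 1 := by
    have : 0 < 1/(2*(k:ℝ)) := by positivity
    rw [hρdef]; linarith
  set f : ℕ → Fin n := fun t => I t ω with hf
  set X : ℕ → Fin n → ℝ := fun t => traj k (fun s _ => f s) x0 t with hX
  have hblock : ∀ r, MatchE k I Ψ x0 r ω → diam (X ((r+1)*n)) ≤ ρ * diam (X (r*n)) := by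
    intro r hM
    have h1 : X ((r+1)*n) = applyU k (fun u => f (r*n + u)) (X (r*n)) n := by
      rw [hX]
      show traj k (fun s _ => f s) x0 ((r+1)*n) = _
      rw [show (r+1)*n = r*n + n by ring]
      exact traj_shift x0 f (r*n) n
    have h2 : applyU k (fun u => f (r*n + u)) (X (r*n)) n =
        applyU k (Ψ (X (r*n))) (X (r*n)) n :=
      applyU_congr _ _ _ n (fun u hu => hM u hu)
    rw [h1, h2]
    exact hΨ (X (r*n))
  have hanti : ∀ {t t' : ℕ}, t ≤ t' → diam (X t') ≤ diam (X t) :=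
    fun h => (diam_traj_antitone hk hkn x0 f h).1
  have claim3 : ∀ j : ℕ, ∃ t, diam (X t) ≤ ρ^j * diam (X 0) := by
    intro j
    induction j with
    | zero => exact ⟨0, by simp⟩
    | succ j ih =>
      obtain ⟨t, ht⟩ := ih
      obtain ⟨r, hr, hM⟩ := hgood t
      have hrn : t ≤ r * n := by
        calc t ≤ r := hr
        _ = r * 1 := (mul_one r).symm
        _ ≤ r * n := Nat.mul_le_mul_left r hn1
      refine ⟨(r+1)*n, ?_⟩
      calc diam (X ((r+1)*n)) ≤ ρ * diam (X (r*n)) := hblock r hM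
        _ ≤ ρ * (ρ^j * diam (X 0)) :=
            mul_le_mul_of_nonneg_left (le_trans (hanti hrn) ht) hρ0
        _ = ρ^(j+1) * diam (X 0) := by ring
  have hdiam0 : Filter.Tendsto (fun t => diam (X t)) Filter.atTop (nhds 0) := by
    rw [Metric.tendsto_atTop]
    intro ε hε
    have hpow := tendsto_pow_atTop_nhds_zero_of_lt_one hρ0 hρ1
    have hpowm : Filter.Tendsto (fun j => ρ^j * diam (X 0)) Filter.atTop (nhds 0) := by
      simpa using hpow.mul_const (diam (X 0))
    obtain ⟨j, hj⟩ := (hpowm.eventually (gt_mem_nhds hε)).exists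
    obtain ⟨t, ht⟩ := claim3 j
    refine ⟨t, fun t' ht' => ?_⟩
    have h1 : diam (X t') ≤ ρ^j * diam (X 0) := le_trans (hanti ht') ht
    have h2 : 0 ≤ diam (X t') := diam_nonneg _
    rw [Real.dist_eq, sub_zero, abs_of_nonneg h2]
    exact lt_of_le_of_lt h1 hj
  have hmono : Monotone (fun t => mnv (X t)) :=
    fun a b h => (diam_traj_antitone hk hkn x0 f h).2.1
  have hmx0 : ∀ t, mxv (X t) ≤ mxv x0 :=
    fun t => (diam_traj_antitone hk hkn x0 f (Nat.zero_le t)).2.2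
  have hbddA : BddAbove (Set.range fun t => mnv (X t)) := by
    refine ⟨mxv x0, ?_⟩
    rintro _ ⟨t, rfl⟩
    exact le_trans (mnv_le_mxv _) (hmx0 t)
  set c : ℝ := ⨆ t, mnv (X t) with hc
  have hc1 : Filter.Tendsto (fun t => mnv (X t)) Filter.atTop (nhds c) :=
    tendsto_atTop_ciSup hmono hbddA
  have hc2 : Filter.Tendsto (fun t => mxv (X t)) Filter.atTop (nhds c) := by
    have heq : (fun t => mxv (X t)) = fun t => mnv (X t) + diam (X t) := by
      funext t; rw [diam]; ring
    rw [heq]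
    simpa using hc1.add hdiam0
  have hcoord : ∀ jc : Fin n, Filter.Tendsto (fun t => X t jc) Filter.atTop (nhds c) :=
    fun jc => tendsto_of_tendsto_of_tendsto_of_le_of_le hc1 hc2
      (fun t => mnv_le (X t) jc) (fun t => le_mxv (X t) jc)
  refine ⟨c, ?_, ?_, ?_⟩
  · obtain ⟨j0, -, hj0⟩ := Finset.exists_mem_eq_inf' Finset.univ_nonempty x0
    have h1 : sInf (Set.range x0) ≤ x0 j0 := csInf_le (Set.finite_range x0).bddBelow ⟨j0, rfl⟩
    have h2 : mnv x0 ≤ c := le_ciSup hbddA 0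
    have h3 : mnv x0 = x0 j0 := hj0
    linarith
  · have h3 : c ≤ mxv x0 := ciSup_le (fun t => le_trans (mnv_le_mxv (X t)) (hmx0 t))
    obtain ⟨j1, -, hj1⟩ := Finset.exists_mem_eq_sup' Finset.univ_nonempty x0
    have h4 : x0 j1 ≤ sSup (Set.range x0) := le_csSup (Set.finite_range x0).bddAbove ⟨j1, rfl⟩
    have h5 : mxv x0 = x0 j1 := hj1
    linarith
  · exact tendsto_pi_nhds.2 hcoord
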